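/- SSD is preserved under mixtures of quantile couplings: let m, m' : [0,1] → ℝ be integrable, U ~ U[0,1], and suppose m(U) ⪰_SSD Δ and m'(U) ⪰_SSD Δ with E[m(U)] = E[m'(U)] = E[Δ] for an integrable Δ. Then for every α ∈ [0,1], αm(U) + (1−α)m'(U) as a function-valued mixture satisfies (αm + (1−α)m')(U) ⪰_SSD Δ. -/

import Mathlib

open MeasureTheory ProbabilityTheory Set

/-- Quantile function of a measure on ℝ. -/
noncomputable def quantileFn (μ : Measure ℝ) (q : ℝ) : ℝ :=
  sInf {x : ℝ | q ≤ (μ (Set.Iic x)).toReal}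

/-- Integrated quantile function. -/
noncomputable def iqf (μ : Measure ℝ) (q : ℝ) : ℝ :=
  ∫ s in (0:ℝ)..q, quantileFn μ s

/-- The uniform distribution on `[0,1]`. -/
noncomputable def unif01 : Measure ℝ := volume.restrict (Set.Icc (0:ℝ) 1)

open Filter
open scoped ENNReal Topology

section basics
variable (μ : Measure ℝ) [IsProbabilityMeasure μ]

lemma quantileFn_eq (s : ℝ) : quantileFn μ s = sInf {x : ℝ | s ≤ cdf μ x} := by
  simp only [quantileFn, cdf_eq_real, measureReal_def]

lemma qset_nonempty {s : ℝ} (hs : s < 1) : {x : ℝ | s ≤ cdf μ x}.Nonempty := by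
  obtain ⟨x, hx⟩ := ((tendsto_cdf_atTop μ).eventually (eventually_ge_nhds hs)).exists
  exact ⟨x, hx⟩

lemma qset_bddBelow {s : ℝ} (hs : 0 < s) : BddBelow {x : ℝ | s ≤ cdf μ x} := by
  obtain ⟨t₀, ht₀⟩ := ((tendsto_cdf_atBot μ).eventually (eventually_lt_nhds hs)).exists
  refine ⟨t₀, fun x hx => ?_⟩
  by_contra h
  push_neg at h
  exact absurd (le_trans hx ((monotone_cdf μ) h.le)) (not_le.2 ht₀)

lemma quantileFn_le_of_le_cdf {s t : ℝ} (hs : 0 < s) (h : s ≤ cdf μ t) :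
    quantileFn μ s ≤ t := by
  rw [quantileFn_eq]
  exact csInf_le (qset_bddBelow μ hs) h

lemma le_cdf_of_quantileFn_le {s t : ℝ} (hs1 : s < 1) (h : quantileFn μ s ≤ t) :
    s ≤ cdf μ t := by
  rcases le_or_gt s 0 with hs | hs
  · exact hs.trans (cdf_nonneg μ t)
  have hne := qset_nonempty μ hs1
  have hbdd := qset_bddBelow μ hs
  set a := sInf {x : ℝ | s ≤ cdf μ x} with ha
  have haQ : quantileFn μ s = a := quantileFn_eq μ s
  -- s ≤ cdf μ a by right-continuity
  have hca : s ≤ cdf μ a := by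
    have hrc : ContinuousWithinAt (cdf μ) (Ioi a) a :=
      ((cdf μ).right_continuous a).mono Ioi_subset_Ici_self
    refine ge_of_tendsto hrc ?_
    filter_upwards [self_mem_nhdsWithin] with x hx
    obtain ⟨y, hy, hyx⟩ := (csInf_lt_iff hbdd hne).1 hx
    exact le_trans hy ((monotone_cdf μ) hyx.le)
  exact hca.trans ((monotone_cdf μ) (haQ ▸ h))

lemma quantileFn_monotoneOn : MonotoneOn (quantileFn μ) (Ioo (0:ℝ) 1) := by
  intro s hs s' hs' hss
  rw [quantileFn_eq, quantileFn_eq]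
  exact csInf_le_csInf (qset_bddBelow μ hs.1) (qset_nonempty μ hs'.2)
    (fun x hx => le_trans hss hx)

end basics

section layer

lemma layer_core {ρ : Measure ℝ} [SFinite ρ] {g : ℝ → ℝ} (hg : Measurable g) (c : ℝ) :
    ∫⁻ ω, ENNReal.ofReal (c - g ω) ∂ρ = ∫⁻ t in Iio c, ρ {ω | g ω ≤ t} := by
  have hS : MeasurableSet {p : ℝ × ℝ | g p.1 ≤ p.2 ∧ p.2 < c} := by
    apply MeasurableSet.inter
    · exact measurableSet_le (hg.comp measurable_fst) measurable_snd
    · exact measurable_snd measurableSet_Iio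
  have h1 : ∀ ω, ENNReal.ofReal (c - g ω)
      = ∫⁻ t, ({p : ℝ × ℝ | g p.1 ≤ p.2 ∧ p.2 < c}.indicator (fun _ => (1:ℝ≥0∞)) (ω, t)) := by
    intro ω
    have h0 : (fun t => ({p : ℝ × ℝ | g p.1 ≤ p.2 ∧ p.2 < c}.indicator
        (fun _ => (1:ℝ≥0∞)) (ω, t)))
        = (Ico (g ω) c).indicator (fun _ => (1:ℝ≥0∞)) := by
      funext t
      simp only [Set.indicator_apply, Set.mem_setOf_eq, Set.mem_Ico]
    rw [h0, lintegral_indicator measurableSet_Ico, setLIntegral_one, Real.volume_Ico]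
  simp_rw [h1]
  rw [lintegral_lintegral_swap (f := fun ω t => ({p : ℝ × ℝ | g p.1 ≤ p.2 ∧ p.2 < c}.indicator
    (fun _ => (1:ℝ≥0∞)) (ω, t)))
    (by exact ((measurable_one.indicator hS).comp
      (measurable_fst.prodMk measurable_snd)).aemeasurable)]
  have h2 : ∀ t : ℝ, (∫⁻ ω, ({p : ℝ × ℝ | g p.1 ≤ p.2 ∧ p.2 < c}.indicator
      (fun _ => (1:ℝ≥0∞)) (ω, t)) ∂ρ)
      = (Iio c).indicator (fun t => ρ {ω | g ω ≤ t}) t := by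
    intro t
    by_cases ht : t < c
    · have h0 : (fun ω => ({p : ℝ × ℝ | g p.1 ≤ p.2 ∧ p.2 < c}.indicator
          (fun _ => (1:ℝ≥0∞)) (ω, t))) = {ω | g ω ≤ t}.indicator (fun _ => (1:ℝ≥0∞)) := by
        funext ω
        simp only [Set.indicator_apply, Set.mem_setOf_eq, ht, and_true]
      rw [h0, lintegral_indicator (measurableSet_le hg measurable_const), setLIntegral_one]
      simp [Set.indicator_apply, ht]
    · have h0 : (fun ω => ({p : ℝ × ℝ | g p.1 ≤ p.2 ∧ p.2 < c}.indicator
          (fun _ => (1:ℝ≥0∞)) (ω, t))) = fun _ => (0:ℝ≥0∞) := by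
        funext ω
        simp only [Set.indicator_apply, Set.mem_setOf_eq, ht, and_false, if_false]
      rw [h0, lintegral_const, zero_mul]
      simp [Set.indicator_apply, ht]
  simp_rw [h2]
  rw [← lintegral_indicator measurableSet_Iio]

lemma layer_le {ρ : Measure ℝ} [SFinite ρ] {g : ℝ → ℝ} (hg : AEMeasurable g ρ) (c : ℝ) :
    ∫⁻ ω, ENNReal.ofReal (c - g ω) ∂ρ = ∫⁻ t in Iio c, ρ {ω | g ω ≤ t} := by
  obtain ⟨g₀, hg₀m, hgg₀⟩ := hg
  have hL : ∫⁻ ω, ENNReal.ofReal (c - g ω) ∂ρ = ∫⁻ ω, ENNReal.ofReal (c - g₀ ω) ∂ρ :=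
    lintegral_congr_ae (hgg₀.mono fun ω h => by dsimp only; rw [h])
  have hR : ∀ t, ρ {ω | g ω ≤ t} = ρ {ω | g₀ ω ≤ t} := fun t =>
    measure_congr (hgg₀.mono fun ω h => by
      show (g ω ≤ t) = (g₀ ω ≤ t)
      rw [h])
  rw [hL, layer_core hg₀m c]
  exact lintegral_congr fun t => (hR t).symm

end layer

section layerpos

lemma layer_pos {α : Type*} [MeasurableSpace α] {ρ : Measure α} {g : α → ℝ}
    (hg : AEMeasurable g ρ) :
    ∫⁻ ω, ENNReal.ofReal (g ω) ∂ρ = ∫⁻ t in Ioi (0:ℝ), ρ {ω | t < g ω} := by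
  have h := lintegral_eq_lintegral_meas_lt ρ (f := fun ω => max (g ω) 0)
    (ae_of_all _ fun ω => le_max_right _ _) (hg.max aemeasurable_const)
  have hL : ∫⁻ ω, ENNReal.ofReal (g ω) ∂ρ = ∫⁻ ω, ENNReal.ofReal (max (g ω) 0) ∂ρ := by
    refine lintegral_congr fun ω => ?_
    rcases le_total (g ω) 0 with h' | h'
    · rw [max_eq_right h', ENNReal.ofReal_of_nonpos h', ENNReal.ofReal_zero]
    · rw [max_eq_left h']
  rw [hL, h]
  refine setLIntegral_congr_fun measurableSet_Ioi (fun t ht => ?_)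
  congr 1
  ext ω
  simp only [Set.mem_setOf_eq, lt_max_iff]
  exact ⟨fun h' => h'.resolve_right (fun h0 => absurd ht (by simp; linarith)), Or.inl⟩

end layerpos

noncomputable def eP (μ : Measure ℝ) (c : ℝ) : ℝ≥0∞ := ∫⁻ x, ENNReal.ofReal (c - x) ∂μ
section comp
variable (μ : Measure ℝ) [IsProbabilityMeasure μ]

lemma eP_eq (c : ℝ) : eP μ c = ∫⁻ t in Iio c, ENNReal.ofReal (cdf μ t) := by
  have h := layer_le (ρ := μ) (g := fun x : ℝ => x) aemeasurable_id c
  rw [eP]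
  rw [show (∫⁻ x, ENNReal.ofReal (c - x) ∂μ) = ∫⁻ t in Iio c, μ {ω | ω ≤ t} from h]
  exact lintegral_congr fun t => (ofReal_cdf μ t).symm

lemma quantileFn_aemeasurable {q : ℝ} (hq : q ≤ 1) :
    AEMeasurable (quantileFn μ) (volume.restrict (Ioo 0 q)) :=
  aemeasurable_restrict_of_monotoneOn measurableSet_Ioo
    ((quantileFn_monotoneOn μ).mono (Ioo_subset_Ioo le_rfl hq))

lemma vol_inter (a q : ℝ) :
    volume ({s : ℝ | s ≤ a} ∩ Ioo 0 q) = ENNReal.ofReal (min a q) := by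
  have h1 : ({s : ℝ | s ≤ a} ∩ Ioo 0 q : Set ℝ) =ᵐ[volume] ({s : ℝ | s ≤ a} ∩ Ioc 0 q : Set ℝ) :=
    (Filter.EventuallyEq.refl _ _).inter Ioo_ae_eq_Ioc
  rw [measure_congr h1]
  have h2 : {s : ℝ | s ≤ a} ∩ Ioc 0 q = Ioc 0 (min a q) := by
    ext s
    simp only [mem_inter_iff, mem_setOf_eq, mem_Ioc, le_min_iff]
    tauto
  rw [h2, Real.volume_Ioc, sub_zero]

lemma lintQ (c : ℝ) {q : ℝ} (hq : q ≤ 1) :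
    ∫⁻ s in Ioo 0 q, ENNReal.ofReal (c - quantileFn μ s)
      = ∫⁻ t in Iio c, ENNReal.ofReal (min (cdf μ t) q) := by
  rcases le_or_gt q 0 with h0 | h0
  · rw [Set.Ioo_eq_empty (by linarith), Measure.restrict_empty, lintegral_zero_measure]
    symm
    have : ∀ t : ℝ, ENNReal.ofReal (min (cdf μ t) q) = 0 := fun t =>
      ENNReal.ofReal_of_nonpos ((min_le_right _ _).trans h0)
    simp [this]
  · rw [layer_le (quantileFn_aemeasurable μ hq) c]
    refine lintegral_congr fun t => ?_
    rw [Measure.restrict_apply' measurableSet_Ioo]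
    have hset : {ω | quantileFn μ ω ≤ t} ∩ Ioo 0 q = {s : ℝ | s ≤ cdf μ t} ∩ Ioo 0 q := by
      ext s
      simp only [mem_inter_iff, mem_setOf_eq, mem_Ioo, and_congr_left_iff, and_imp]
      intro hs1 hs2
      exact ⟨fun h => le_cdf_of_quantileFn_le μ (lt_of_lt_of_le hs2 hq) h,
        fun h => quantileFn_le_of_le_cdf μ hs1 h⟩
    rw [hset, vol_inter]

lemma lintQ_pos1 :
    ∫⁻ s in Ioo (0:ℝ) 1, ENNReal.ofReal (quantileFn μ s) = ∫⁻ x, ENNReal.ofReal x ∂μ := by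
  have h2 := layer_pos (ρ := μ) (g := fun x : ℝ => x) aemeasurable_id
  rw [layer_pos (quantileFn_aemeasurable μ le_rfl),
    show (∫⁻ x, ENNReal.ofReal x ∂μ) = ∫⁻ t in Ioi (0:ℝ), μ {ω | t < ω} from h2]
  refine lintegral_congr fun t => ?_
  rw [Measure.restrict_apply' measurableSet_Ioo]
  have hset : {ω | t < quantileFn μ ω} ∩ Ioo 0 1 = Ioo (cdf μ t) 1 := by
    ext s
    simp only [mem_inter_iff, mem_setOf_eq, mem_Ioo]
    constructor
    · rintro ⟨h1, h2, h3⟩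
      refine ⟨?_, h3⟩
      by_contra hcon
      push_neg at hcon
      exact absurd (quantileFn_le_of_le_cdf μ h2 hcon) (not_le.2 h1)
    · rintro ⟨h1, h2⟩
      have h0 : 0 < s := lt_of_le_of_lt (cdf_nonneg μ t) h1
      refine ⟨?_, h0, h2⟩
      by_contra hcon
      push_neg at hcon
      exact absurd (le_cdf_of_quantileFn_le μ h2 hcon) (not_le.2 h1)
  rw [hset, Real.volume_Ioo]
  have : {ω : ℝ | t < ω} = Ioi t := rfl
  rw [this, ← compl_Iic, measure_compl measurableSet_Iic (measure_ne_top μ _), measure_univ,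
    ← ofReal_cdf μ t, ← ENNReal.ofReal_one, ← ENNReal.ofReal_sub _ (cdf_nonneg μ t)]

lemma eP_ne_top (hint : Integrable id μ) (c : ℝ) : eP μ c ≠ ∞ := by
  have hb : ∀ x : ℝ, ENNReal.ofReal (c - x) ≤ ENNReal.ofReal |c| + (‖x‖₊ : ℝ≥0∞) := by
    intro x
    have h1 : ENNReal.ofReal (c - x) ≤ ENNReal.ofReal (|c| + |x|) :=
      ENNReal.ofReal_le_ofReal (by
        have := neg_abs_le x
        have := le_abs_self c
        linarith)
    refine h1.trans ?_
    rw [ENNReal.ofReal_add (abs_nonneg c) (abs_nonneg x), ← enorm_eq_nnnorm, Real.enorm_eq_ofReal_abs x]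
  refine ne_of_lt (lt_of_le_of_lt (lintegral_mono hb) ?_)
  rw [lintegral_add_left measurable_const]
  simp only [lintegral_const, measure_univ, mul_one]
  exact ENNReal.add_lt_top.2 ⟨ENNReal.ofReal_lt_top, hint.2⟩

lemma lint_pos_ne_top (hint : Integrable id μ) : (∫⁻ x, ENNReal.ofReal x ∂μ) ≠ ∞ := by
  refine ne_of_lt (lt_of_le_of_lt (lintegral_mono fun x => ?_) hint.2)
  simp only [id_eq]
  rw [Real.enorm_eq_ofReal_abs x]
  exact ENNReal.ofReal_le_ofReal (le_abs_self x)

lemma ofReal_abs_split (a : ℝ) :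
    (‖a‖₊ : ℝ≥0∞) = ENNReal.ofReal a + ENNReal.ofReal (-a) := by
  rw [← enorm_eq_nnnorm, Real.enorm_eq_ofReal_abs]
  rcases le_total a 0 with h | h
  · rw [abs_of_nonpos h, ENNReal.ofReal_of_nonpos h, zero_add]
  · rw [abs_of_nonneg h, ENNReal.ofReal_of_nonpos (neg_nonpos.2 h), add_zero]

lemma quantileFn_integrableOn (hint : Integrable id μ) :
    IntegrableOn (quantileFn μ) (Ioo (0:ℝ) 1) volume := by
  refine ⟨(quantileFn_aemeasurable μ le_rfl).aestronglyMeasurable, ?_⟩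
  show (∫⁻ s in Ioo (0:ℝ) 1, (‖quantileFn μ s‖₊ : ℝ≥0∞)) < ∞
  calc ∫⁻ s in Ioo (0:ℝ) 1, (‖quantileFn μ s‖₊ : ℝ≥0∞)
      = ∫⁻ s in Ioo (0:ℝ) 1,
        (ENNReal.ofReal (quantileFn μ s) + ENNReal.ofReal (-(quantileFn μ s))) :=
        lintegral_congr fun s => ofReal_abs_split _
    _ = (∫⁻ s in Ioo (0:ℝ) 1, ENNReal.ofReal (quantileFn μ s))
        + ∫⁻ s in Ioo (0:ℝ) 1, ENNReal.ofReal (-(quantileFn μ s)) :=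
        lintegral_add_left' (quantileFn_aemeasurable μ le_rfl).ennreal_ofReal _
    _ < ∞ := by
        have hneg : ∫⁻ s in Ioo (0:ℝ) 1, ENNReal.ofReal (-(quantileFn μ s)) = eP μ 0 := by
          have h := lintQ μ 0 (le_refl (1:ℝ))
          simp only [zero_sub] at h
          rw [h, eP_eq]
          refine lintegral_congr fun t => ?_
          rw [min_eq_left (cdf_le_one μ t)]
        rw [hneg, lintQ_pos1 μ]
        exact ENNReal.add_lt_top.2 ⟨lt_of_le_of_ne (le_top) (lint_pos_ne_top μ hint),
          lt_of_le_of_ne (le_top) (eP_ne_top μ hint 0)⟩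

end comp

section keylemmas
variable (μ : Measure ℝ) [IsProbabilityMeasure μ]

lemma iqf_ioo {q : ℝ} (hq : 0 ≤ q) : iqf μ q = ∫ s in Ioo 0 q, quantileFn μ s := by
  rw [iqf, intervalIntegral.integral_of_le hq, integral_Ioc_eq_integral_Ioo]

lemma quantileFn_intOn (hint : Integrable id μ) {q : ℝ} (hq1 : q ≤ 1) :
    IntegrableOn (quantileFn μ) (Ioo (0:ℝ) q) volume :=
  (quantileFn_integrableOn μ hint).mono_set (Ioo_subset_Ioo le_rfl hq1)

lemma sub_int (hint : Integrable id μ) (c : ℝ) {q : ℝ} (hq0 : 0 ≤ q) (hq1 : q ≤ 1) :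
    ∫ s in Ioo (0:ℝ) q, (c - quantileFn μ s) = q * c - iqf μ q := by
  have hvol : volume (Ioo (0:ℝ) q) < ⊤ := by
    rw [Real.volume_Ioo]; exact ENNReal.ofReal_lt_top
  rw [integral_sub (by have h : IntegrableOn (fun _ : ℝ => c) (Ioo (0:ℝ) q) volume := integrableOn_const hvol.ne; exact h) (quantileFn_intOn μ hint hq1),
    setIntegral_const, measureReal_def, iqf_ioo μ hq0, Real.volume_Ioo, sub_zero,
    ENNReal.toReal_ofReal hq0, smul_eq_mul]

lemma int_le_lint {ρ : Measure ℝ} (f : ℝ → ℝ) (hf : Integrable f ρ) :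
    ∫ x, f x ∂ρ ≤ (∫⁻ x, ENNReal.ofReal (f x) ∂ρ).toReal := by
  rw [integral_eq_lintegral_pos_part_sub_lintegral_neg_part hf]
  have : 0 ≤ (∫⁻ x, ENNReal.ofReal (-f x) ∂ρ).toReal := ENNReal.toReal_nonneg
  linarith

lemma lemA (hint : Integrable id μ) (c : ℝ) {q : ℝ} (hq0 : 0 ≤ q) (hq1 : q ≤ 1) :
    q * c - (eP μ c).toReal ≤ iqf μ q := by
  have h1 := sub_int μ hint c hq0 hq1
  have h2 := int_le_lint (ρ := volume.restrict (Ioo 0 q)) (fun s => c - quantileFn μ s)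
    ((integrableOn_const (ne_of_lt (by rw [Real.volume_Ioo]; exact ENNReal.ofReal_lt_top))).sub
      (quantileFn_intOn μ hint hq1))
  have h3 : (∫⁻ s in Ioo (0:ℝ) q, ENNReal.ofReal (c - quantileFn μ s)).toReal
      ≤ (eP μ c).toReal := by
    refine ENNReal.toReal_mono (eP_ne_top μ hint c) ?_
    rw [lintQ μ c hq1, eP_eq]
    exact lintegral_mono fun t => ENNReal.ofReal_le_ofReal (min_le_left _ _)
  linarith [h1 ▸ h2]

lemma lemB (hint : Integrable id μ) {q : ℝ} (hq0 : 0 < q) (hq1 : q < 1) :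
    iqf μ q ≤ q * quantileFn μ q - (eP μ (quantileFn μ q)).toReal := by
  set c := quantileFn μ q with hc
  have hnonneg : ∀ s ∈ Ioo (0:ℝ) q, 0 ≤ c - quantileFn μ s := fun s hs =>
    sub_nonneg.2 (quantileFn_monotoneOn μ ⟨hs.1, hs.2.trans hq1⟩ ⟨hq0, hq1⟩ hs.2.le)
  have h1 := sub_int μ hint c hq0.le hq1.le
  have h2 : ∫ s in Ioo (0:ℝ) q, (c - quantileFn μ s)
      = (∫⁻ s in Ioo (0:ℝ) q, ENNReal.ofReal (c - quantileFn μ s)).toReal :=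
    integral_eq_lintegral_of_nonneg_ae
      ((ae_restrict_iff' measurableSet_Ioo).2 (Filter.Eventually.of_forall hnonneg))
      (aestronglyMeasurable_const.sub (quantileFn_aemeasurable μ hq1.le).aestronglyMeasurable)
  have h3 : ∫⁻ s in Ioo (0:ℝ) q, ENNReal.ofReal (c - quantileFn μ s) = eP μ c := by
    rw [lintQ μ c hq1.le, eP_eq]
    refine setLIntegral_congr_fun measurableSet_Iio (fun t ht => ?_)
    have : cdf μ t < q := by
      by_contra hcon
      push_neg at hcon
      exact absurd (quantileFn_le_of_le_cdf μ hq0 hcon) (not_le.2 ht)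
    rw [min_eq_left this.le]
  rw [h3] at h2
  linarith [h1 ▸ h2]

lemma lemB' (hint : Integrable id μ) (c : ℝ) :
    (eP μ c).toReal ≤ (cdf μ c) * c - iqf μ (cdf μ c) := by
  set q := cdf μ c with hq
  have hq0 : 0 ≤ q := cdf_nonneg μ c
  have hq1 : q ≤ 1 := cdf_le_one μ c
  have h3 : ∫⁻ s in Ioo (0:ℝ) q, ENNReal.ofReal (c - quantileFn μ s) = eP μ c := by
    rw [lintQ μ c hq1, eP_eq]
    refine setLIntegral_congr_fun measurableSet_Iio (fun t ht => ?_)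
    rw [min_eq_left ((monotone_cdf μ) (le_of_lt ht))]
  have hnonneg : ∀ s ∈ Ioo (0:ℝ) q, 0 ≤ c - quantileFn μ s := fun s hs =>
    sub_nonneg.2 (quantileFn_le_of_le_cdf μ hs.1 hs.2.le)
  have h2 : ∫ s in Ioo (0:ℝ) q, (c - quantileFn μ s)
      = (∫⁻ s in Ioo (0:ℝ) q, ENNReal.ofReal (c - quantileFn μ s)).toReal :=
    integral_eq_lintegral_of_nonneg_ae
      ((ae_restrict_iff' measurableSet_Ioo).2 (Filter.Eventually.of_forall hnonneg))
      (aestronglyMeasurable_const.sub (quantileFn_aemeasurable μ hq1).aestronglyMeasurable)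
  have h1 := sub_int μ hint c hq0 hq1
  rw [h3] at h2
  linarith [h1 ▸ h2]

lemma lintQ_neg1 : ∫⁻ s in Ioo (0:ℝ) 1, ENNReal.ofReal (-(quantileFn μ s)) = eP μ 0 := by
  have h := lintQ μ 0 (le_refl (1:ℝ))
  simp only [zero_sub] at h
  rw [h, eP_eq]
  exact lintegral_congr fun t => by rw [min_eq_left (cdf_le_one μ t)]

lemma iqf_one (hint : Integrable id μ) : iqf μ 1 = ∫ x, x ∂μ := by
  rw [iqf_ioo μ zero_le_one,
    integral_eq_lintegral_pos_part_sub_lintegral_neg_part (quantileFn_integrableOn μ hint),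
    integral_eq_lintegral_pos_part_sub_lintegral_neg_part (by exact hint : Integrable (fun x : ℝ => x) μ)]
  rw [lintQ_pos1 μ, lintQ_neg1 μ, show eP μ 0 = ∫⁻ a : ℝ, ENNReal.ofReal (-a) ∂μ from by
    rw [eP]; exact lintegral_congr fun x => by rw [zero_sub]]

end keylemmas

instance : IsProbabilityMeasure unif01 :=
  ⟨by rw [unif01, Measure.restrict_apply_univ, Real.volume_Icc]; norm_num⟩

lemma integrable_unif01 {f : ℝ → ℝ} (h : IntegrableOn f (Set.Icc (0:ℝ) 1)) :
    Integrable f unif01 := h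

lemma integral_unif01 (f : ℝ → ℝ) : ∫ u, f u ∂unif01 = ∫ u in Set.Icc (0:ℝ) 1, f u := rfl

/-- SSD preserved under pointwise mixtures: if `m(U) ⪰_SSD Δ` and
`m'(U) ⪰_SSD Δ` with `E[m(U)] = E[m'(U)] = E[Δ]` for `U ∼ U[0,1]`, then for every
`α ∈ [0,1]` the pointwise convex combination satisfies
`(αm + (1−α)m')(U) ⪰_SSD Δ`. -/
theorem stmt_12 (m m' : ℝ → ℝ) (hm : Measurable m) (hm' : Measurable m')
    (hmi : IntegrableOn m (Set.Icc (0:ℝ) 1)) (hmi' : IntegrableOn m' (Set.Icc (0:ℝ) 1))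
    (ν : Measure ℝ) [IsProbabilityMeasure ν] (hν : Integrable (fun x : ℝ => x) ν)
    (hmean : ∫ u in Set.Icc (0:ℝ) 1, m u = ∫ x, x ∂ν)
    (hmean' : ∫ u in Set.Icc (0:ℝ) 1, m' u = ∫ x, x ∂ν)
    (hssd : ∀ q ∈ Set.Icc (0:ℝ) 1, iqf ν q ≤ iqf (Measure.map m unif01) q)
    (hssd' : ∀ q ∈ Set.Icc (0:ℝ) 1, iqf ν q ≤ iqf (Measure.map m' unif01) q) :
    ∀ α : ℝ, α ∈ Set.Icc (0:ℝ) 1 →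
      ∀ q ∈ Set.Icc (0:ℝ) 1,
        iqf ν q ≤ iqf (Measure.map (fun u => α * m u + (1 - α) * m' u) unif01) q := by
  intro α hα q hq
  obtain ⟨hα0, hα1⟩ := hα
  obtain ⟨hq0, hq1⟩ := hq
  have hν' : Integrable id ν := hν
  set Z : ℝ → ℝ := fun u => α * m u + (1 - α) * m' u with hZdef
  have hZm : Measurable Z := (hm.const_mul α).add (hm'.const_mul (1 - α))
  have hmi1 : Integrable m unif01 := integrable_unif01 hmi
  have hmi'1 : Integrable m' unif01 := integrable_unif01 hmi'
  have hZi : Integrable Z unif01 := (hmi1.const_mul α).add (hmi'1.const_mul (1 - α))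
  haveI hPm : IsProbabilityMeasure (Measure.map m unif01) :=
    Measure.isProbabilityMeasure_map hm.aemeasurable
  haveI hPm' : IsProbabilityMeasure (Measure.map m' unif01) :=
    Measure.isProbabilityMeasure_map hm'.aemeasurable
  haveI hPZ : IsProbabilityMeasure (Measure.map Z unif01) :=
    Measure.isProbabilityMeasure_map hZm.aemeasurable
  have hidm : Integrable id (Measure.map m unif01) := by
    rw [integrable_map_measure aestronglyMeasurable_id hm.aemeasurable]
    exact hmi1
  have hidm' : Integrable id (Measure.map m' unif01) := by
    rw [integrable_map_measure aestronglyMeasurable_id hm'.aemeasurable]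
    exact hmi'1
  have hidZ : Integrable id (Measure.map Z unif01) := by
    rw [integrable_map_measure aestronglyMeasurable_id hZm.aemeasurable]
    exact hZi
  rcases eq_or_lt_of_le hq0 with h0 | h0
  · rw [← h0]
    simp [iqf, intervalIntegral.integral_same]
  rcases eq_or_lt_of_le hq1 with h1 | h1
  swap
  · -- main case 0 < q < 1
    set c := quantileFn ν q with hc
    have hBν := lemB ν hν' h0 h1
    have key : ∀ (f : ℝ → ℝ), Measurable f → Integrable f unif01 →
        (∀ r ∈ Set.Icc (0:ℝ) 1, iqf ν r ≤ iqf (Measure.map f unif01) r) →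
        ∀ cc : ℝ, (eP (Measure.map f unif01) cc).toReal ≤ (eP ν cc).toReal := by
      intro f hf hfi hfssd cc
      haveI : IsProbabilityMeasure (Measure.map f unif01) :=
        Measure.isProbabilityMeasure_map hf.aemeasurable
      have hidf : Integrable id (Measure.map f unif01) := by
        rw [integrable_map_measure aestronglyMeasurable_id hf.aemeasurable]
        exact hfi
      have hB' := lemB' (Measure.map f unif01) hidf cc
      have hr0 : (0:ℝ) ≤ cdf (Measure.map f unif01) cc := cdf_nonneg _ _
      have hr1 : cdf (Measure.map f unif01) cc ≤ 1 := cdf_le_one _ _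
      have h2 := hfssd (cdf (Measure.map f unif01) cc) ⟨hr0, hr1⟩
      have h3 := lemA ν hν' cc hr0 hr1
      linarith
    have km := key m hm hmi1 hssd c
    have km' := key m' hm' hmi'1 hssd' c
    -- convexity
    have hνtop : eP ν c ≠ ⊤ := eP_ne_top ν hν' c
    have hmtop : eP (Measure.map m unif01) c ≠ ⊤ := eP_ne_top _ hidm c
    have hm'top : eP (Measure.map m' unif01) c ≠ ⊤ := eP_ne_top _ hidm' c
    have hconv : (eP (Measure.map Z unif01) c).toReal
        ≤ α * (eP (Measure.map m unif01) c).toReal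
          + (1 - α) * (eP (Measure.map m' unif01) c).toReal := by
      have e1 : eP (Measure.map Z unif01) c = ∫⁻ u, ENNReal.ofReal (c - Z u) ∂unif01 := by
        rw [eP, lintegral_map (by fun_prop) hZm]
      have e2 : eP (Measure.map m unif01) c = ∫⁻ u, ENNReal.ofReal (c - m u) ∂unif01 := by
        rw [eP, lintegral_map (by fun_prop) hm]
      have e3 : eP (Measure.map m' unif01) c = ∫⁻ u, ENNReal.ofReal (c - m' u) ∂unif01 := by
        rw [eP, lintegral_map (by fun_prop) hm']
      have hpt : ∀ u, ENNReal.ofReal (c - Z u)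
          ≤ ENNReal.ofReal α * ENNReal.ofReal (c - m u)
            + ENNReal.ofReal (1 - α) * ENNReal.ofReal (c - m' u) := by
        intro u
        have : c - Z u = α * (c - m u) + (1 - α) * (c - m' u) := by rw [hZdef]; ring
        rw [this, ← ENNReal.ofReal_mul hα0, ← ENNReal.ofReal_mul (by linarith)]
        exact ENNReal.ofReal_add_le
      have hle : eP (Measure.map Z unif01) c
          ≤ ENNReal.ofReal α * eP (Measure.map m unif01) c
            + ENNReal.ofReal (1 - α) * eP (Measure.map m' unif01) c := by
        rw [e1, e2, e3]
        calc ∫⁻ u, ENNReal.ofReal (c - Z u) ∂unif01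
            ≤ ∫⁻ u, (ENNReal.ofReal α * ENNReal.ofReal (c - m u)
              + ENNReal.ofReal (1 - α) * ENNReal.ofReal (c - m' u)) ∂unif01 :=
              lintegral_mono hpt
          _ = _ := by
              rw [lintegral_add_left (by fun_prop), lintegral_const_mul _ (by fun_prop),
                lintegral_const_mul _ (by fun_prop)]
      have := ENNReal.toReal_mono (by
        exact ENNReal.add_ne_top.2 ⟨ENNReal.mul_ne_top ENNReal.ofReal_ne_top hmtop,
          ENNReal.mul_ne_top ENNReal.ofReal_ne_top hm'top⟩) hle
      rwa [ENNReal.toReal_add (ENNReal.mul_ne_top ENNReal.ofReal_ne_top hmtop)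
          (ENNReal.mul_ne_top ENNReal.ofReal_ne_top hm'top),
        ENNReal.toReal_mul, ENNReal.toReal_mul, ENNReal.toReal_ofReal hα0,
        ENNReal.toReal_ofReal (by linarith)] at this
    have hAZ := lemA (Measure.map Z unif01) hidZ c h0.le h1.le
    have p1 := mul_le_mul_of_nonneg_left km hα0
    have p2 := mul_le_mul_of_nonneg_left km' (by linarith : (0:ℝ) ≤ 1 - α)
    linarith
  · -- q = 1
    have hmZ : ∫ x, x ∂(Measure.map Z unif01) = ∫ x, x ∂ν := by
      have hswap : ∫ x, x ∂(Measure.map Z unif01) = ∫ u, Z u ∂unif01 :=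
        integral_map hZm.aemeasurable aestronglyMeasurable_id
      rw [hswap, hZdef, integral_add (hmi1.const_mul α) (hmi'1.const_mul (1 - α)),
        integral_const_mul, integral_const_mul, integral_unif01, integral_unif01,
        hmean, hmean']
      ring
    rw [h1, iqf_one ν hν', iqf_one (Measure.map Z unif01) hidZ, hmZ]
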